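/- arXiv:math/0612377 — 2 statements merged into one kernel-verified Lean document; each statement's English description precedes it below -/
import Mathlib

section
/- Let I be a maximum independent set of K_r^n (r ≥ 3), i.e. the set of vertices with a fixed value in a fixed coordinate, and let J be an independent set of K_r^n with J ⊄ I. Then |I \ J| ≥ (r-1)^{n-1}. -/
/-- The weak product `K_r^n`: vertices are `Fin n → ZMod r`, two vertices are
adjacent iff they differ in every coordinate. -/
def weakProductGraph (r n : ℕ) : SimpleGraph (Fin n → ZMod r) :=
  SimpleGraph.fromRel (fun x y => ∀ k, x k ≠ y k)

/-- A finset of vertices is independent: no two of its elements are adjacent. -/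
def IsIndepFinset {V : Type*} (G : SimpleGraph V) (J : Finset V) : Prop :=
  ∀ x ∈ J, ∀ y ∈ J, ¬ G.Adj x y

theorem stmt3 (r n : ℕ) [NeZero r] (hr : 3 ≤ r) (hn : 1 ≤ n)
    (j : Fin n) (i : ZMod r)
    (I : Finset (Fin n → ZMod r))
    (hI : I = Finset.univ.filter (fun x => x j = i))
    (J : Finset (Fin n → ZMod r))
    (hJ : IsIndepFinset (weakProductGraph r n) J)
    (hJI : ¬ J ⊆ I) :
    (r - 1) ^ (n - 1) ≤ (I \ J).card := by
  obtain ⟨y, hyJ, hyI⟩ := Finset.not_subset.mp hJI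
  have hyj : y j ≠ i := by
    intro h
    exact hyI (by simp [hI, h])
  set T : Finset (Fin n → ZMod r) :=
    Fintype.piFinset (fun k => if k = j then {i} else ({y k}ᶜ : Finset (ZMod r))) with hT
  have hTsub : T ⊆ I \ J := by
    intro x hx
    rw [Fintype.mem_piFinset] at hx
    have hxj : x j = i := by
      have := hx j
      simpa using this
    have hxk : ∀ k, x k ≠ y k := by
      intro k
      by_cases hk : k = j
      · subst hk; rw [hxj]; exact fun h => hyj h.symm
      · have := hx k
        simpa [hk] using this
    have hadj : (weakProductGraph r n).Adj x y := by
      refine ⟨fun h => hxk j (by rw [h]), Or.inl hxk⟩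
    rw [Finset.mem_sdiff]
    constructor
    · simp [hI, hxj]
    · intro hxJ
      exact hJ x hxJ y hyJ hadj
  have hcard : T.card = (r - 1) ^ (n - 1) := by
    rw [hT, Fintype.card_piFinset]
    have : ∀ k : Fin n, (if k = j then ({i} : Finset (ZMod r)) else {y k}ᶜ).card
        = if k = j then 1 else r - 1 := by
      intro k
      by_cases hk : k = j <;> simp [hk, Finset.card_compl, ZMod.card]
    simp_rw [this]
    rw [← Finset.mul_prod_erase Finset.univ _ (Finset.mem_univ j), if_pos rfl, one_mul,
      Finset.prod_congr rfl (fun k hk => if_neg (Finset.ne_of_mem_erase hk)),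
      Finset.prod_const, Finset.card_erase_of_mem (Finset.mem_univ j), Finset.card_univ,
      Fintype.card_fin]
  calc (r - 1) ^ (n - 1) = T.card := hcard.symm
    _ ≤ (I \ J).card := Finset.card_le_card hTsub
end

section
/- Bennett's inequality: Let X_1, ..., X_n be independent real-valued random variables with E[X_i] = 0 and X_i ≤ c almost surely, for some c > 0. Let σ² = Σ Var[X_i]. Then for any t > 0, P[Σ X_i ≥ t] ≤ exp(−(σ²/c²)·h(tc/σ²)), where h(u) = (1+u)ln(1+u) − u. -/
open MeasureTheory ProbabilityTheory Real

lemma aux_f1 {u : ℝ} (hu : 0 ≤ u) : 0 ≤ u * Real.exp u - Real.exp u + 1 := by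
  have hmono : MonotoneOn (fun w => w * Real.exp w - Real.exp w + 1) (Set.Ici 0) := by
    apply monotoneOn_of_deriv_nonneg (convex_Ici 0)
    · fun_prop
    · fun_prop
    · intro x hx
      have hd : HasDerivAt (fun w => w * Real.exp w - Real.exp w + 1) (x * Real.exp x) x := by
        have := (((hasDerivAt_id x).mul (Real.hasDerivAt_exp x)).sub (Real.hasDerivAt_exp x)).add_const 1
        refine this.congr_deriv ?_
        simp only [id_eq]; ring
      rw [hd.deriv]
      have : 0 ≤ x := le_of_lt (by simpa using hx)
      positivity
  have := hmono (Set.self_mem_Ici) hu hu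
  simpa using this

lemma aux_f2 {u : ℝ} (hu : 0 ≤ u) : 0 ≤ u * Real.exp u + u - 2 * Real.exp u + 2 := by
  have hmono : MonotoneOn (fun w => w * Real.exp w + w - 2 * Real.exp w + 2) (Set.Ici 0) := by
    apply monotoneOn_of_deriv_nonneg (convex_Ici 0)
    · fun_prop
    · fun_prop
    · intro x hx
      have hd : HasDerivAt (fun w => w * Real.exp w + w - 2 * Real.exp w + 2)
          (x * Real.exp x - Real.exp x + 1) x := by
        have := ((((hasDerivAt_id x).mul (Real.hasDerivAt_exp x)).add (hasDerivAt_id x)).sub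
          ((Real.hasDerivAt_exp x).const_mul 2)).add_const 2
        refine this.congr_deriv ?_
        simp only [id_eq]; ring
      rw [hd.deriv]
      exact aux_f1 (le_of_lt (by simpa using hx))
  have := hmono (Set.self_mem_Ici) hu hu
  simpa using this

-- monotonicity of (exp u - u - 1)/u²
lemma aux_gmono {u v : ℝ} (hu : 0 < u) (huv : u ≤ v) :
    (Real.exp u - u - 1) / u ^ 2 ≤ (Real.exp v - v - 1) / v ^ 2 := by
  have hmono : MonotoneOn (fun w => (Real.exp w - w - 1) / w ^ 2) (Set.Icc u v) := by
    apply monotoneOn_of_deriv_nonneg (convex_Icc u v)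
    · apply ContinuousOn.div (by fun_prop) (by fun_prop)
      intro x hx; have : 0 < x := lt_of_lt_of_le hu hx.1
      positivity
    · intro x hx
      rw [interior_Icc] at hx
      have hx0 : 0 < x := lt_trans hu hx.1
      have hd : HasDerivAt (fun w => (Real.exp w - w - 1) / w ^ 2)
          (((Real.exp x - 1) * x ^ 2 - (Real.exp x - x - 1) * (2 * x)) / (x ^ 2) ^ 2) x := by
        have h1 : HasDerivAt (fun w => Real.exp w - w - 1) (Real.exp x - 1) x := by
          have := ((Real.hasDerivAt_exp x).sub (hasDerivAt_id x)).sub_const 1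
          simpa using this
        have h2 : HasDerivAt (fun w : ℝ => w ^ 2) (2 * x) x := by
          simpa using hasDerivAt_pow 2 x
        exact h1.div h2 (by positivity)
      exact hd.differentiableAt.differentiableWithinAt
    · intro x hx
      rw [interior_Icc] at hx
      have hx0 : 0 < x := lt_trans hu hx.1
      have hd : HasDerivAt (fun w => (Real.exp w - w - 1) / w ^ 2)
          (((Real.exp x - 1) * x ^ 2 - (Real.exp x - x - 1) * (2 * x)) / (x ^ 2) ^ 2) x := by
        have h1 : HasDerivAt (fun w => Real.exp w - w - 1) (Real.exp x - 1) x := by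
          have := ((Real.hasDerivAt_exp x).sub (hasDerivAt_id x)).sub_const 1
          simpa using this
        have h2 : HasDerivAt (fun w : ℝ => w ^ 2) (2 * x) x := by
          simpa using hasDerivAt_pow 2 x
        exact h1.div h2 (by positivity)
      rw [hd.deriv]
      have hnum : (Real.exp x - 1) * x ^ 2 - (Real.exp x - x - 1) * (2 * x)
          = x * (x * Real.exp x + x - 2 * Real.exp x + 2) := by ring
      rw [hnum]
      have := aux_f2 hx0.le
      positivity
  exact hmono (Set.left_mem_Icc.2 huv) (Set.right_mem_Icc.2 huv) huv

-- exp u ≤ 1 + u + u²/2 for u ≤ 0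
lemma aux_exp_le {u : ℝ} (hu : u ≤ 0) : Real.exp u ≤ 1 + u + u ^ 2 / 2 := by
  have hmono : AntitoneOn (fun w => 1 + w + w ^ 2 / 2 - Real.exp w) (Set.Iic 0) := by
    apply antitoneOn_of_deriv_nonpos (convex_Iic 0)
    · fun_prop
    · fun_prop
    · intro x hx
      have hd : HasDerivAt (fun w => 1 + w + w ^ 2 / 2 - Real.exp w) (1 + x - Real.exp x) x := by
        have h := (((hasDerivAt_const x (1:ℝ)).add (hasDerivAt_id x)).add
            ((hasDerivAt_pow 2 x).div_const 2)).sub (Real.hasDerivAt_exp x)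
        refine h.congr_deriv ?_
        push_cast [id_eq]; ring
      rw [hd.deriv]
      have := Real.add_one_le_exp x
      linarith
  have := hmono (by exact hu) (Set.self_mem_Iic) hu
  simp only [Real.exp_zero] at this
  nlinarith [this]

-- exp v - v - 1 ≥ v²/2 for 0 ≤ v
lemma aux_exp_ge {v : ℝ} (hv : 0 ≤ v) : v ^ 2 / 2 ≤ Real.exp v - v - 1 := by
  have hmono : MonotoneOn (fun w => Real.exp w - w - 1 - w ^ 2 / 2) (Set.Ici 0) := by
    apply monotoneOn_of_deriv_nonneg (convex_Ici 0)
    · fun_prop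
    · fun_prop
    · intro x hx
      have hx0 : 0 ≤ x := le_of_lt (by simpa using hx)
      have hd : HasDerivAt (fun w => Real.exp w - w - 1 - w ^ 2 / 2) (Real.exp x - 1 - x) x := by
        have := (((Real.hasDerivAt_exp x).sub (hasDerivAt_id x)).sub_const 1).sub
          ((hasDerivAt_pow 2 x).div_const 2)
        refine this.congr_deriv ?_
        push_cast [id_eq]; ring
      rw [hd.deriv]
      have := Real.add_one_le_exp x
      linarith
  have := hmono (Set.self_mem_Ici) hv hv
  simp only [Real.exp_zero] at this
  nlinarith [this]

lemma aux_key {u v : ℝ} (huv : u ≤ v) (hv : 0 < v) :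
    Real.exp u ≤ 1 + u + u ^ 2 * ((Real.exp v - v - 1) / v ^ 2) := by
  rcases le_or_gt u 0 with h | h
  · have h1 := aux_exp_le h
    have h2 := aux_exp_ge hv.le
    have hd : u ^ 2 / 2 ≤ u ^ 2 * ((Real.exp v - v - 1) / v ^ 2) := by
      have hq : (1:ℝ)/2 ≤ (Real.exp v - v - 1) / v ^ 2 := by
        rw [le_div_iff₀ (by positivity)]; nlinarith
      calc u ^ 2 / 2 = u ^ 2 * (1/2) := by ring
      _ ≤ _ := mul_le_mul_of_nonneg_left hq (sq_nonneg u)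
    linarith
  · have hg := aux_gmono h huv
    have hrw : Real.exp u - u - 1 = u ^ 2 * ((Real.exp u - u - 1) / u ^ 2) := by
      field_simp
    have := mul_le_mul_of_nonneg_left hg (sq_nonneg u)
    linarith

lemma aux_ptwise {x c l : ℝ} (hx : x ≤ c) (hc : 0 < c) (hl : 0 < l) :
    Real.exp (l * x) ≤ 1 + l * x + (Real.exp (l * c) - l * c - 1) / c ^ 2 * x ^ 2 := by
  have hkey := aux_key (u := l * x) (v := l * c)
    (mul_le_mul_of_nonneg_left hx hl.le) (by positivity)
  have heq : (l * x) ^ 2 * ((Real.exp (l * c) - l * c - 1) / (l * c) ^ 2)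
      = (Real.exp (l * c) - l * c - 1) / c ^ 2 * x ^ 2 := by
    field_simp
  linarith [heq ▸ hkey]

theorem stmt6 {Ω : Type*} [MeasurableSpace Ω] (μ : Measure Ω) [IsProbabilityMeasure μ]
    {n : ℕ} (X : Fin n → Ω → ℝ) (hmeas : ∀ i, Measurable (X i))
    (hindep : iIndepFun X μ)
    (hL2 : ∀ i, MemLp (X i) 2 μ)
    (hmean : ∀ i, μ[X i] = 0)
    (c : ℝ) (hc : 0 < c) (hbdd : ∀ i, ∀ᵐ ω ∂μ, X i ω ≤ c)
    (σ2 : ℝ) (hσ2 : σ2 = ∑ i, variance (X i) μ)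
    (t : ℝ) (ht : 0 < t) :
    (μ {ω | t ≤ ∑ i, X i ω}).toReal ≤
      Real.exp (-(σ2 / c ^ 2) *
        ((1 + t * c / σ2) * Real.log (1 + t * c / σ2) - t * c / σ2)) := by
  have hσnn : 0 ≤ σ2 := hσ2 ▸ Finset.sum_nonneg fun i _ => variance_nonneg _ _
  rcases eq_or_lt_of_le hσnn with hσ0 | hσpos
  · rw [← hσ0]
    have h1 : (μ {ω | t ≤ ∑ i, X i ω}).toReal ≤ 1 := by
      have h := prob_le_one (μ := μ) (s := {ω | t ≤ ∑ i, X i ω})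
      calc (μ {ω | t ≤ ∑ i, X i ω}).toReal ≤ (1 : ENNReal).toReal :=
            ENNReal.toReal_mono (by simp) h
        _ = 1 := by simp
    have h2 : -(0 / c ^ 2 : ℝ) * ((1 + t * c / 0) * Real.log (1 + t * c / 0) - t * c / 0) = 0 := by
      rw [zero_div]; ring
    rw [h2, Real.exp_zero]
    exact h1
  -- main case
  have hσne : σ2 ≠ 0 := hσpos.ne'
  set u0 : ℝ := t * c / σ2 with hu0def
  have hu0 : 0 < u0 := by positivity
  set L : ℝ := Real.log (1 + u0) with hLdef
  have hL : 0 < L := Real.log_pos (by linarith)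
  set l : ℝ := L / c with hldef
  have hl : 0 < l := by positivity
  have hexp : Real.exp (l * c) = 1 + u0 := by
    rw [hldef, div_mul_cancel₀ _ hc.ne', hLdef, Real.exp_log (by positivity)]
  set g : ℝ := (Real.exp (l * c) - l * c - 1) / c ^ 2 with hgdef
  -- per-variable integrability and mgf bound
  have hbound_ae : ∀ i, ∀ᵐ ω ∂μ, Real.exp (l * X i ω) ≤ 1 + l * X i ω + g * X i ω ^ 2 := by
    intro i
    filter_upwards [hbdd i] with ω hω
    have := aux_ptwise hω hc hl
    linarith
  have hint_dom : ∀ i, Integrable (fun ω => 1 + l * X i ω + g * X i ω ^ 2) μ := by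
    intro i
    exact ((integrable_const 1).add (((hL2 i).integrable one_le_two).const_mul l)).add
      (((hL2 i).integrable_sq).const_mul g)
  have hint_exp : ∀ i, Integrable (fun ω => Real.exp (l * X i ω)) μ := by
    intro i
    refine (hint_dom i).mono' (((hmeas i).const_mul l).exp.aestronglyMeasurable) ?_
    filter_upwards [hbound_ae i] with ω hω
    rw [Real.norm_eq_abs, abs_of_pos (Real.exp_pos _)]
    exact hω
  have hvar : ∀ i, μ[fun ω => X i ω ^ 2] = variance (X i) μ := by
    intro i
    have := variance_eq_sub (hL2 i)
    rw [hmean i] at this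
    simp only [Pi.pow_apply] at this
    rw [this]; ring
  have hmgf_le : ∀ i, mgf (X i) μ l ≤ Real.exp (g * variance (X i) μ) := by
    intro i
    have hle : mgf (X i) μ l ≤ 1 + g * variance (X i) μ := by
      have h1 : mgf (X i) μ l ≤ μ[fun ω => 1 + l * X i ω + g * X i ω ^ 2] :=
        integral_mono_ae (hint_exp i) (hint_dom i) (hbound_ae i)
      have iC : Integrable (fun ω => l * X i ω) μ := by
        exact ((hL2 i).integrable one_le_two).const_mul l
      have iA : Integrable (fun ω => 1 + l * X i ω) μ := by
        exact (integrable_const 1).add iC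
      have iB : Integrable (fun ω => g * X i ω ^ 2) μ := by
        exact ((hL2 i).integrable_sq).const_mul g
      have h2 : μ[fun ω => 1 + l * X i ω + g * X i ω ^ 2]
          = 1 + l * μ[X i] + g * μ[fun ω => X i ω ^ 2] := by
        rw [integral_add iA iB, integral_add (integrable_const 1) iC,
          integral_const, integral_const_mul, integral_const_mul]
        simp
      rw [h2, hmean i, hvar i] at h1
      simpa using h1
    calc mgf (X i) μ l ≤ 1 + g * variance (X i) μ := hle
      _ ≤ Real.exp (g * variance (X i) μ) := by
          linarith [Real.add_one_le_exp (g * variance (X i) μ)]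
  -- Chernoff bound
  have hS_int : Integrable (fun ω => Real.exp (l * (∑ i, X i) ω)) μ :=
    hindep.integrable_exp_mul_sum hmeas (fun i _ => hint_exp i)
  have hch := measure_ge_le_exp_mul_mgf (X := ∑ i, X i) (μ := μ) t hl.le hS_int
  have hset : {ω | t ≤ (∑ i, X i) ω} = {ω | t ≤ ∑ i, X i ω} := by
    ext ω; simp [Finset.sum_apply]
  rw [hset] at hch
  have hprod : mgf (∑ i, X i) μ l ≤ Real.exp (g * σ2) := by
    rw [hindep.mgf_sum hmeas Finset.univ]
    calc ∏ i, mgf (X i) μ l ≤ ∏ i, Real.exp (g * variance (X i) μ) :=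
          Finset.prod_le_prod (fun i _ => mgf_nonneg) (fun i _ => hmgf_le i)
      _ = Real.exp (∑ i, g * variance (X i) μ) := by rw [Real.exp_sum]
      _ = Real.exp (g * σ2) := by rw [← Finset.mul_sum, ← hσ2]
  have hfinal : Real.exp (-l * t) * Real.exp (g * σ2)
      = Real.exp (-(σ2 / c ^ 2) * ((1 + t * c / σ2) * Real.log (1 + t * c / σ2) - t * c / σ2)) := by
    rw [← Real.exp_add]
    congr 1
    rw [hgdef, hexp, hldef, hu0def, hLdef, hu0def]
    field_simp
    ring
  calc (μ {ω | t ≤ ∑ i, X i ω}).toReal ≤ Real.exp (-l * t) * mgf (∑ i, X i) μ l := hch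
    _ ≤ Real.exp (-l * t) * Real.exp (g * σ2) := by
        exact mul_le_mul_of_nonneg_left hprod (Real.exp_pos _).le
    _ = _ := hfinal
end
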